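/- Let (x_t)_{1≤t≤T} be a real sequence and {(x̂_t^{(i)})_{1≤t≤T} : 1 ≤ i ≤ N} a collection of predicting sequences. Define aggregation weights by α̂_{i,t} = exp(-η Σ_{s<t} (x̂_s^{(i)} - x_s)²) / Σ_k exp(-η Σ_{s<t} (x̂_s^{(k)} - x_s)²) and the aggregated predictor x̂_t = Σ_i α̂_{i,t} x̂_t^{(i)}. Then for any η > 0: (1/T) Σ_{t=1}^T (x̂_t - x_t)² ≤ min_{1≤i≤N} (1/T) Σ_{t=1}^T (x̂_t^{(i)} - x_t)² + (log N)/(Tη) + (1/T) Σ_{t=1}^T (y_t² - 1/(2η))₊, where y_t = |x_t| + max_{1≤i≤N} |x̂_t^{(i)}|. -/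

import Mathlib

open Finset

lemma expconc_concave (l a : ℝ) (hl : 0 < l) (hla : 2 * l * a^2 ≤ 1) :
    ConcaveOn ℝ (Set.Icc (-a) a) (fun u => Real.exp (-(l * u^2))) := by
  have h1 : ∀ u : ℝ, HasDerivAt (fun u => Real.exp (-(l * u^2)))
      ((-(2*l*u)) * Real.exp (-(l * u^2))) u := by
    intro u
    have hg : HasDerivAt (fun u : ℝ => -(l * u^2)) (-(2*l*u)) u := by
      have : HasDerivAt (fun y : ℝ => -(l * y^2)) _ u := ((hasDerivAt_pow 2 u).const_mul l).neg
      convert this using 1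
      push_cast; ring
    have := hg.exp
    convert this using 1
    ring
  have h2 : ∀ u : ℝ, HasDerivAt (fun u => (-(2*l*u)) * Real.exp (-(l * u^2)))
      ((4*l^2*u^2 - 2*l) * Real.exp (-(l * u^2))) u := by
    intro u
    have hg : HasDerivAt (fun u : ℝ => -(2*l*u)) (-(2*l)) u := by
      have : HasDerivAt (fun y : ℝ => -(2*l*y)) _ u := ((hasDerivAt_id u).const_mul (2*l)).neg
      convert this using 1; ring
    have : HasDerivAt (fun y => (-(2*l*y)) * Real.exp (-(l * y^2))) _ u := hg.mul (h1 u)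
    convert this using 1
    ring
  refine concaveOn_of_hasDerivWithinAt2_nonpos (convex_Icc _ _) ?_
    (f' := fun u => (-(2*l*u)) * Real.exp (-(l * u^2)))
    (f'' := fun u => (4*l^2*u^2 - 2*l) * Real.exp (-(l * u^2)))
    (fun u _ => (h1 u).hasDerivWithinAt) (fun u _ => (h2 u).hasDerivWithinAt) ?_
  · exact (Real.continuous_exp.comp (by continuity)).continuousOn
  · intro u hu
    rw [interior_Icc] at hu
    have hu2 : u^2 ≤ a^2 := sq_le_sq' hu.1.le hu.2.le
    have : 4*l^2*u^2 - 2*l ≤ 0 := by nlinarith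
    exact mul_nonpos_of_nonpos_of_nonneg this (Real.exp_nonneg _)

lemma expconc_key {N : ℕ} (hN : 0 < N) (w u : Fin N → ℝ) (a : ℝ)
    (hw0 : ∀ i, 0 ≤ w i) (hw1 : ∑ i, w i = 1) (hu : ∀ i, |u i| ≤ a) :
    ∑ i, w i * Real.exp (-(u i ^ 2)) ≤
      Real.exp (-(∑ i, w i * u i) ^ 2 + max (a ^ 2 - 1 / 2) 0) := by
  haveI : Nonempty (Fin N) := Fin.pos_iff_nonempty.mp hN
  have ha : 0 ≤ a := le_trans (abs_nonneg _) (hu (Classical.arbitrary _))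
  rcases eq_or_lt_of_le ha with ha0 | ha0
  · -- a = 0, all u i = 0
    have hu0 : ∀ i, u i = 0 := fun i => abs_eq_zero.mp (le_antisymm (ha0 ▸ hu i) (abs_nonneg _))
    simp only [hu0]
    simp [hw1, ← ha0]
  set l : ℝ := min 1 (1 / (2 * a ^ 2)) with hldef
  have ha2 : 0 < a ^ 2 := by positivity
  have hl0 : 0 < l := lt_min one_pos (by positivity)
  have hl1 : l ≤ 1 := min_le_left _ _
  have hla : 2 * l * a ^ 2 ≤ 1 := by
    have : l ≤ 1 / (2 * a ^ 2) := min_le_right _ _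
    calc 2 * l * a ^ 2 ≤ 2 * (1 / (2 * a ^ 2)) * a ^ 2 := by nlinarith
    _ = 1 := by field_simp
  set m := ∑ i, w i * u i with hm
  have hmabs : |m| ≤ a := by
    calc |m| ≤ ∑ i, |w i * u i| := Finset.abs_sum_le_sum_abs _ _
    _ ≤ ∑ i, w i * a := by
        refine Finset.sum_le_sum fun i _ => ?_
        rw [abs_mul, abs_of_nonneg (hw0 i)]
        exact mul_le_mul_of_nonneg_left (hu i) (hw0 i)
    _ = a := by rw [← Finset.sum_mul, hw1, one_mul]
  have hm2 : m ^ 2 ≤ a ^ 2 := sq_le_sq' (neg_le_of_abs_le hmabs) (le_of_abs_le hmabs)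
  have step1 : ∑ i, w i * Real.exp (-(u i ^ 2)) ≤ ∑ i, w i * Real.exp (-(l * u i ^ 2)) := by
    refine Finset.sum_le_sum fun i _ => ?_
    refine mul_le_mul_of_nonneg_left (Real.exp_le_exp.mpr ?_) (hw0 i)
    nlinarith [sq_nonneg (u i)]
  have step2 : ∑ i, w i * Real.exp (-(l * u i ^ 2)) ≤ Real.exp (-(l * m ^ 2)) := by
    have hj := (expconc_concave l a hl0 hla).le_map_sum (t := Finset.univ)
      (w := w) (p := u) (fun i _ => hw0 i) hw1
      (fun i _ => Set.mem_Icc.mpr ⟨neg_le_of_abs_le (hu i), le_of_abs_le (hu i)⟩)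
    simpa [smul_eq_mul, hm] using hj
  have step3 : Real.exp (-(l * m ^ 2)) ≤ Real.exp (-m ^ 2 + max (a ^ 2 - 1 / 2) 0) := by
    refine Real.exp_le_exp.mpr ?_
    have hd : (1 - l) * m ^ 2 ≤ max (a ^ 2 - 1 / 2) 0 := by
      rcases le_total 1 (1 / (2 * a ^ 2)) with h | h
      · have : l = 1 := min_eq_left h
        simp [this, le_max_iff]
      · have hle : l = 1 / (2 * a ^ 2) := min_eq_right h
        have h1 : 1 / 2 ≤ a ^ 2 := by
          rw [div_le_iff₀ (by positivity : (0:ℝ) < 2*a^2)] at h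
          nlinarith
        have : (1 - l) * m ^ 2 ≤ (1 - l) * a ^ 2 := by nlinarith
        have heq : (1 - l) * a ^ 2 = a ^ 2 - 1 / 2 := by
          rw [hle]; field_simp
        rw [heq] at this
        exact le_trans this (le_max_left _ _)
    nlinarith
  linarith

lemma cancel_aux (A B C : ℝ) (hC : C ≠ 0) : C * (A / C * B) = A * B := by
  field_simp

theorem aggregation_quadratic_loss_oracle
    (N T : ℕ) (hN : 0 < N) (hT : 0 < T) (η : ℝ) (hη : 0 < η)
    (x : ℕ → ℝ) (xh : Fin N → ℕ → ℝ)
    (w : Fin N → ℕ → ℝ)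
    (hw : ∀ i t, w i t =
      Real.exp (-η * ∑ s ∈ range t, (xh i s - x s) ^ 2) /
        ∑ k : Fin N, Real.exp (-η * ∑ s ∈ range t, (xh k s - x s) ^ 2))
    (agg : ℕ → ℝ) (hagg : ∀ t, agg t = ∑ i : Fin N, w i t * xh i t)
    (y : ℕ → ℝ) (hy : ∀ t, y t = |x t| + ⨆ i : Fin N, |xh i t|) :
    (1 / T) * ∑ t ∈ range T, (agg t - x t) ^ 2 ≤
      (⨅ i : Fin N, (1 / T) * ∑ t ∈ range T, (xh i t - x t) ^ 2) +
        Real.log N / (T * η) +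
        (1 / T) * ∑ t ∈ range T, max ((y t) ^ 2 - 1 / (2 * η)) 0 := by
  haveI : Nonempty (Fin N) := Fin.pos_iff_nonempty.mp hN
  set L : Fin N → ℕ → ℝ := fun i t => ∑ s ∈ range t, (xh i s - x s) ^ 2 with hL
  set Z : ℕ → ℝ := fun t => ∑ k : Fin N, Real.exp (-η * L k t) with hZ
  set δ : ℕ → ℝ := fun t => max ((y t) ^ 2 - 1 / (2 * η)) 0 with hδ
  have hTpos : (0:ℝ) < T := by exact_mod_cast hT
  have hZpos : ∀ t, 0 < Z t :=
    fun t => Finset.sum_pos (fun k _ => Real.exp_pos _) univ_nonempty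
  have hw0 : ∀ i t, 0 ≤ w i t := by
    intro i t; rw [hw]; positivity
  have hwsum : ∀ t, ∑ i : Fin N, w i t = 1 := by
    intro t
    have : ∑ i : Fin N, w i t = (∑ i : Fin N, Real.exp (-η * L i t)) / Z t := by
      rw [Finset.sum_div]; exact Finset.sum_congr rfl fun i _ => hw i t
    rw [this, div_self (hZpos t).ne']
  have hsq : Real.sqrt η ^ 2 = η := Real.sq_sqrt hη.le
  -- per-round bound
  have hround : ∀ t, ∑ i : Fin N, w i t * Real.exp (-η * (xh i t - x t) ^ 2) ≤
      Real.exp (-(η * (agg t - x t) ^ 2) + η * δ t) := by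
    intro t
    have hybd : ∀ i, |xh i t - x t| ≤ y t := by
      intro i
      have h1 : |xh i t| ≤ ⨆ j : Fin N, |xh j t| :=
        le_ciSup (f := fun j : Fin N => |xh j t|)
          (Set.Finite.bddAbove (Set.finite_range _)) i
      calc |xh i t - x t| ≤ |xh i t| + |x t| := abs_sub _ _
      _ ≤ y t := by rw [hy]; linarith
    have hkey := expconc_key hN (fun i => w i t)
      (fun i => Real.sqrt η * (xh i t - x t)) (Real.sqrt η * y t)
      (fun i => hw0 i t)
      (hwsum t)
      (fun i => by
        rw [abs_mul, abs_of_nonneg (Real.sqrt_nonneg _)]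
        exact mul_le_mul_of_nonneg_left (hybd i) (Real.sqrt_nonneg _))
    have e2 : ∑ i : Fin N, w i t * (Real.sqrt η * (xh i t - x t))
        = Real.sqrt η * (agg t - x t) := by
      calc ∑ i : Fin N, w i t * (Real.sqrt η * (xh i t - x t))
          = ∑ i : Fin N, (Real.sqrt η * (w i t * xh i t)
              - Real.sqrt η * x t * w i t) :=
            Finset.sum_congr rfl fun i _ => by ring
        _ = Real.sqrt η * (∑ i : Fin N, w i t * xh i t)
              - Real.sqrt η * x t * (∑ i : Fin N, w i t) := by
            rw [Finset.sum_sub_distrib, ← Finset.mul_sum, ← Finset.mul_sum]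
        _ = Real.sqrt η * (agg t - x t) := by rw [hwsum, hagg]; ring
    calc ∑ i : Fin N, w i t * Real.exp (-η * (xh i t - x t) ^ 2)
        = ∑ i : Fin N, w i t * Real.exp (-((Real.sqrt η * (xh i t - x t)) ^ 2)) := by
          refine Finset.sum_congr rfl fun i _ => ?_
          rw [mul_pow, hsq]; ring_nf
      _ ≤ Real.exp (-(∑ i : Fin N, w i t * (Real.sqrt η * (xh i t - x t))) ^ 2
            + max ((Real.sqrt η * y t) ^ 2 - 1 / 2) 0) := hkey
      _ = Real.exp (-(η * (agg t - x t) ^ 2) + η * δ t) := by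
          rw [e2]
          have hmax : η * δ t = max ((Real.sqrt η * y t) ^ 2 - 1 / 2) 0 := by
            rw [hδ]
            rw [mul_max_of_nonneg _ _ hη.le, mul_zero]
            congr 1
            rw [mul_pow, hsq]
            field_simp
          rw [hmax, mul_pow, hsq]
  -- recursion for Z
  have hrec : ∀ t, Z (t+1) = Z t * ∑ i : Fin N, w i t * Real.exp (-η * (xh i t - x t) ^ 2) := by
    intro t
    rw [Finset.mul_sum]
    refine Finset.sum_congr rfl fun k _ => ?_
    rw [hw]
    have hZt : (∑ k : Fin N, Real.exp (-η * ∑ s ∈ range t, (xh k s - x s) ^ 2)) = Z t := rfl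
    rw [hZt, cancel_aux _ _ _ (hZpos t).ne', ← Real.exp_add]
    congr 1
    simp only [hL]
    rw [Finset.sum_range_succ]
    ring
  -- upper bound on Z by induction
  have hub : ∀ t, Z t ≤ N * Real.exp (∑ s ∈ range t, (-(η * (agg s - x s) ^ 2) + η * δ s)) := by
    intro t
    induction t with
    | zero =>
      simp only [hZ, hL, range_zero, sum_empty, mul_zero, Real.exp_zero, Finset.sum_const,
        card_univ, Fintype.card_fin, nsmul_eq_mul, mul_one]
      exact le_refl _
    | succ t ih =>
      rw [hrec t, Finset.sum_range_succ, Real.exp_add, ← mul_assoc]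
      refine mul_le_mul ih (hround t) ?_ (by positivity)
      exact Finset.sum_nonneg fun i _ => mul_nonneg (hw0 i t) (Real.exp_nonneg _)
  -- lower bound
  have hlb : ∀ i : Fin N, Real.exp (-η * L i T) ≤ Z T := fun i =>
    Finset.single_le_sum (fun k _ => (Real.exp_pos (-η * L k T)).le) (Finset.mem_univ i)
  -- combine
  have hNpos : (0:ℝ) < N := by exact_mod_cast hN
  have hmain : ∀ i : Fin N, η * (∑ t ∈ range T, (agg t - x t) ^ 2) ≤
      η * L i T + Real.log N + η * ∑ t ∈ range T, δ t := by
    intro i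
    have h := (hlb i).trans (hub T)
    have hlog := Real.log_le_log (Real.exp_pos _) h
    rw [Real.log_exp, Real.log_mul hNpos.ne' (Real.exp_pos _).ne', Real.log_exp] at hlog
    have hsum : ∑ s ∈ range T, (-(η * (agg s - x s) ^ 2) + η * δ s)
        = -(η * ∑ s ∈ range T, (agg s - x s) ^ 2) + η * ∑ s ∈ range T, δ s := by
      rw [Finset.sum_add_distrib, Finset.sum_neg_distrib, ← Finset.mul_sum, ← Finset.mul_sum]
    rw [hsum] at hlog
    linarith
  -- conclusion
  suffices h : (1 / T : ℝ) * ∑ t ∈ range T, (agg t - x t) ^ 2 - Real.log N / (T * η)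
      - (1 / T) * ∑ t ∈ range T, δ t ≤ ⨅ i : Fin N, (1 / T : ℝ) * L i T by
    have : (⨅ i : Fin N, (1 / T : ℝ) * ∑ t ∈ range T, (xh i t - x t) ^ 2)
        = ⨅ i : Fin N, (1 / T : ℝ) * L i T := rfl
    rw [this]
    linarith
  refine le_ciInf fun i => ?_
  have key2 : ∑ t ∈ range T, (agg t - x t) ^ 2
      ≤ L i T + Real.log N / η + ∑ t ∈ range T, δ t := by
    have h1 : ∑ t ∈ range T, (agg t - x t) ^ 2 - L i T - ∑ t ∈ range T, δ t
        ≤ Real.log N / η := by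
      rw [le_div_iff₀ hη]
      nlinarith [hmain i]
    linarith
  have h3 := mul_le_mul_of_nonneg_left key2 (by positivity : (0:ℝ) ≤ 1 / T)
  have hexp : (1 / T : ℝ) * (L i T + Real.log N / η + ∑ t ∈ range T, δ t)
      = (1 / T) * L i T + Real.log N / (T * η) + (1 / T) * ∑ t ∈ range T, δ t := by
    field_simp
  rw [hexp] at h3
  linarith
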